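/- Let G be a finite simple graph on Fin n, let d ≥ 1, r ≥ 1, and let Π : Fin n → Matrix (Fin d) (Fin d) ℂ be a family of rank-r orthogonal projections realizing G (Π j * Π k = 0 whenever j and k are adjacent). Suppose every fractional coloring of G has total weight strictly greater than d/r. Then for EVERY density matrix ρ on ℂ^d there exists a unitary matrix U such that the vector x ∈ ℝ^n with components x_k = Re(tr(U * Π_k * U† * ρ)) does not lie in STAB(G). (State-independent contextuality of G in dimension d.) -/

import Mathlib

open Matrix
open scoped ComplexOrder

/-- A finset of vertices is independent: no two of its vertices are adjacent. -/
def IsIndep {n : ℕ} (G : SimpleGraph (Fin n)) (s : Finset (Fin n)) : Prop :=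
  ∀ v ∈ s, ∀ u ∈ s, ¬ G.Adj v u

/-- Incidence vector of a finset of vertices. -/
def incVec {n : ℕ} (s : Finset (Fin n)) : Fin n → ℝ := fun v => if v ∈ s then 1 else 0

/-- STAB(G): the convex hull of the incidence vectors of the independent sets of `G`. -/
def STAB {n : ℕ} (G : SimpleGraph (Fin n)) : Set (Fin n → ℝ) :=
  convexHull ℝ {x | ∃ s : Finset (Fin n), IsIndep G s ∧ x = incVec s}

/-- A fractional coloring of `G`: nonnegative weights supported on independent sets,
covering every vertex with total weight at least 1. -/
def IsFracColoring {n : ℕ} (G : SimpleGraph (Fin n)) (w : Finset (Fin n) → ℝ) : Prop :=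
  (∀ s, 0 ≤ w s) ∧ (∀ s, w s ≠ 0 → IsIndep G s) ∧
    (∀ v : Fin n, 1 ≤ ∑ s : Finset (Fin n), if v ∈ s then w s else 0)

/-- Total weight of a weight assignment on independent sets. -/
def totalWeight {n : ℕ} (w : Finset (Fin n) → ℝ) : ℝ := ∑ s : Finset (Fin n), w s

/-- `P` is an orthogonal projection of rank `r`: Hermitian, idempotent, of rank `r`. -/
def IsProjOfRank {d : ℕ} (r : ℕ) (P : Matrix (Fin d) (Fin d) ℂ) : Prop :=
  P.IsHermitian ∧ P * P = P ∧ P.rank = r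

/-- A family of projectors realizes the orthogonality graph `G`:
adjacent vertices carry orthogonal projectors. -/
def Realizes {n d : ℕ} (G : SimpleGraph (Fin n)) (P : Fin n → Matrix (Fin d) (Fin d) ℂ) : Prop :=
  ∀ j k, G.Adj j k → P j * P k = 0



lemma trace_of_proj {d r : ℕ} {P : Matrix (Fin d) (Fin d) ℂ}
    (hH : P.IsHermitian) (hI : P * P = P) (hr : P.rank = r) : P.trace = r := by
  have hU := (Matrix.mem_unitaryGroup_iff').mp (hH.eigenvectorUnitary).2
  have htr : P.trace = ∑ i, (hH.eigenvalues i : ℂ) := by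
    conv_lhs => rw [hH.spectral_theorem]
    rw [Unitary.conjStarAlgAut_apply, Matrix.trace_mul_cycle, hU, Matrix.one_mul, trace_diagonal]
    rfl
  have hDiag : star (hH.eigenvectorUnitary : Matrix (Fin d) (Fin d) ℂ) * P *
      (hH.eigenvectorUnitary : Matrix (Fin d) (Fin d) ℂ) = diagonal (RCLike.ofReal ∘ hH.eigenvalues) := by
    have hspec := hH.spectral_theorem
    rw [Unitary.conjStarAlgAut_apply] at hspec
    calc star (hH.eigenvectorUnitary : Matrix (Fin d) (Fin d) ℂ) * P *
          (hH.eigenvectorUnitary : Matrix (Fin d) (Fin d) ℂ)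
        = star (hH.eigenvectorUnitary : Matrix (Fin d) (Fin d) ℂ) *
          ((hH.eigenvectorUnitary : Matrix (Fin d) (Fin d) ℂ) * diagonal (RCLike.ofReal ∘ hH.eigenvalues) *
            star (hH.eigenvectorUnitary : Matrix (Fin d) (Fin d) ℂ)) *
            (hH.eigenvectorUnitary : Matrix (Fin d) (Fin d) ℂ) := by rw [← hspec]
      _ = (star (hH.eigenvectorUnitary : Matrix (Fin d) (Fin d) ℂ) * (hH.eigenvectorUnitary : Matrix (Fin d) (Fin d) ℂ)) *
            diagonal (RCLike.ofReal ∘ hH.eigenvalues) *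
            (star (hH.eigenvectorUnitary : Matrix (Fin d) (Fin d) ℂ) * (hH.eigenvectorUnitary : Matrix (Fin d) (Fin d) ℂ)) := by
          simp only [Matrix.mul_assoc]
      _ = _ := by rw [hU, Matrix.one_mul, Matrix.mul_one]
  have hsq : ∀ i, hH.eigenvalues i * hH.eigenvalues i = hH.eigenvalues i := by
    intro i
    have h2 : (diagonal (RCLike.ofReal ∘ hH.eigenvalues) : Matrix (Fin d) (Fin d) ℂ) *
        diagonal (RCLike.ofReal ∘ hH.eigenvalues) = diagonal (RCLike.ofReal ∘ hH.eigenvalues) := by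
      rw [← hDiag]
      calc (star (hH.eigenvectorUnitary : Matrix (Fin d) (Fin d) ℂ) * P * hH.eigenvectorUnitary) *
          (star (hH.eigenvectorUnitary : Matrix (Fin d) (Fin d) ℂ) * P * hH.eigenvectorUnitary)
          = star (hH.eigenvectorUnitary : Matrix (Fin d) (Fin d) ℂ) * (P * P) * hH.eigenvectorUnitary := by
            have hU2 := (Matrix.mem_unitaryGroup_iff).mp (hH.eigenvectorUnitary).2
            rw [Matrix.mul_assoc, Matrix.mul_assoc, Matrix.mul_assoc]
            rw [← Matrix.mul_assoc (hH.eigenvectorUnitary : Matrix (Fin d) (Fin d) ℂ)]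
            rw [hU2, Matrix.one_mul, ← Matrix.mul_assoc, ← Matrix.mul_assoc, ← Matrix.mul_assoc]
        _ = _ := by rw [hI]
    have h3 : (RCLike.ofReal ∘ hH.eigenvalues) i * (RCLike.ofReal ∘ hH.eigenvalues) i
        = (RCLike.ofReal ∘ hH.eigenvalues) i :=
      congrFun (Matrix.diagonal_injective ((diagonal_mul_diagonal _ _).symm.trans h2)) i
    have := congrArg Complex.re h3
    simpa using this
  have h01 : ∀ i, hH.eigenvalues i = 0 ∨ hH.eigenvalues i = 1 := by
    intro i
    rcases mul_eq_zero.mp (by linarith [hsq i] : hH.eigenvalues i * (hH.eigenvalues i - 1) = 0) with h | h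
    · exact Or.inl h
    · exact Or.inr (by linarith)
  have hcard : Fintype.card {i // hH.eigenvalues i ≠ 0} = r := by
    rw [← hH.rank_eq_card_non_zero_eigs, hr]
  rw [htr]
  have : ∀ i, (hH.eigenvalues i : ℂ) = if hH.eigenvalues i ≠ 0 then 1 else 0 := by
    intro i
    rcases h01 i with h | h <;> simp [h]
  rw [Finset.sum_congr rfl (fun i _ => this i), Finset.sum_boole, ← hcard, Fintype.card_subtype]

noncomputable def sgn (b : Bool) : ℂ := if b then 1 else -1

noncomputable def myU (m : ℕ) (a : Fin (m+1)) (ε : Fin (m+1) → Bool) :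
    Matrix (Fin (m+1)) (Fin (m+1)) ℂ :=
  Matrix.of fun j k => if j = k + a then sgn (ε k) else 0

lemma sgn_mul_self (b : Bool) : sgn b * sgn b = 1 := by cases b <;> simp [sgn]

lemma star_sgn (b : Bool) : star (sgn b) = sgn b := by cases b <;> simp [sgn]

lemma star_ite {p : Prop} [Decidable p] (x : ℂ) :
    star (if p then x else 0) = if p then star x else 0 := by split <;> simp

lemma myU_unitary (m : ℕ) (a : Fin (m+1)) (ε : Fin (m+1) → Bool) :
    myU m a ε ∈ Matrix.unitaryGroup (Fin (m+1)) ℂ := by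
  rw [Matrix.mem_unitaryGroup_iff']
  ext j k
  simp only [Matrix.mul_apply, Matrix.conjTranspose_apply, Matrix.star_apply, myU, Matrix.of_apply, Matrix.one_apply]
  rw [Finset.sum_eq_single (j + a)]
  · simp only [star_ite, star_sgn, star_zero]
    by_cases h : j = k
    · subst h; simp [sgn_mul_self]
    · have : ¬ (j + a = k + a) := fun hc => h (by
        have := add_right_cancel hc; exact this)
      simp [h, this]
  · intro b _ hb
    simp only [star_ite, star_sgn, star_zero]
    rw [if_neg (fun hc => hb hc), zero_mul]
  · simp

lemma conj_entry (m : ℕ) (a : Fin (m+1)) (ε : Fin (m+1) → Bool)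
    (ρ : Matrix (Fin (m+1)) (Fin (m+1)) ℂ) (j k : Fin (m+1)) :
    ((myU m a ε)ᴴ * ρ * myU m a ε) j k = sgn (ε j) * sgn (ε k) * ρ (j + a) (k + a) := by
  simp only [Matrix.mul_apply, Matrix.conjTranspose_apply, Matrix.star_apply, myU, Matrix.of_apply]
  rw [Finset.sum_eq_single (k + a)]
  · rw [if_pos rfl]
    rw [Finset.sum_eq_single (j + a)]
    · simp only [star_ite, star_sgn, star_zero, if_pos rfl]
      simp only [if_true]
      ring
    · intro b _ hb
      rw [star_ite]; rw [if_neg (fun hc => hb hc)]; simp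
    · simp
  · intro b _ hb
    rw [if_neg (fun hc => hb hc), mul_zero]
  · simp

lemma sgn_sum (m : ℕ) (j k : Fin (m+1)) :
    ∑ ε : Fin (m+1) → Bool, sgn (ε j) * sgn (ε k)
      = if j = k then (2^(m+1) : ℂ) else 0 := by
  by_cases h : j = k
  · subst h
    rw [if_pos rfl]
    rw [Finset.sum_congr rfl (fun ε _ => sgn_mul_self (ε j))]
    simp [Finset.card_univ]
  · rw [if_neg h]
    apply Finset.sum_ninvolution (fun ε => Function.update ε j (!(ε j)))
    · intro ε
      have h1 : Function.update ε j (!(ε j)) j = !(ε j) := Function.update_self _ _ _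
      have h2 : Function.update ε j (!(ε j)) k = ε k := Function.update_of_ne (Ne.symm (Ne.symm (fun hc => h hc.symm))) _ _
      rw [h1, h2]
      cases hb : ε j <;> cases hc : ε k <;> simp [sgn]
    · intro ε hne
      intro hc
      have := congrFun hc j
      rw [Function.update_self] at this
      cases hεj : ε j <;> rw [hεj] at this <;> simp at this
    · intro ε; exact Finset.mem_univ _
    · intro ε
      ext i
      by_cases hi : i = j
      · subst hi; simp [Function.update_self]
      · simp [Function.update_of_ne hi]

lemma avg_identity (m : ℕ) (ρ : Matrix (Fin (m+1)) (Fin (m+1)) ℂ) :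
    ∑ a : Fin (m+1), ∑ ε : Fin (m+1) → Bool, (myU m a ε)ᴴ * ρ * myU m a ε
      = ((2^(m+1) : ℂ) * ρ.trace) • 1 := by
  ext j k
  rw [Matrix.sum_apply]
  simp only [Matrix.sum_apply]
  have : ∀ a : Fin (m+1), ∑ ε : Fin (m+1) → Bool, ((myU m a ε)ᴴ * ρ * myU m a ε) j k
      = if j = k then (2^(m+1) : ℂ) * ρ (j + a) (j + a) else 0 := by
    intro a
    rw [Finset.sum_congr rfl (fun ε _ => conj_entry m a ε ρ j k)]
    rw [← Finset.sum_mul, sgn_sum]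
    by_cases h : j = k
    · subst h; simp
    · simp [h]
  rw [Finset.sum_congr rfl (fun a _ => this a)]
  by_cases h : j = k
  · subst h
    simp only [if_pos rfl, if_true]
    rw [← Finset.mul_sum]
    have : ∑ a : Fin (m+1), ρ (j + a) (j + a) = ρ.trace := by
      rw [Matrix.trace]
      exact Fintype.sum_bijective (fun a => j + a) (Equiv.addLeft j).bijective _ _ (fun a => rfl)
    rw [this]
    simp [Matrix.smul_apply, Matrix.one_apply]
  · simp [h, Matrix.smul_apply, Matrix.one_apply]
lemma extract_coloring {n d r : ℕ} (G : SimpleGraph (Fin n)) (hd : 0 < d) (hr : 0 < r)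
    (hmem : (fun _ : Fin n => (r : ℝ) / d) ∈ STAB G) :
    ∃ w : Finset (Fin n) → ℝ, IsFracColoring G w ∧ totalWeight w = (d : ℝ) / r := by
  classical
  rw [STAB, convexHull_eq] at hmem
  obtain ⟨ι, t, w, z, hw0, hw1, hzS, hcm⟩ := hmem
  rw [Finset.centerMass_eq_of_sum_1 _ _ hw1] at hcm
  set φ : ι → Finset (Fin n) := fun i => Finset.univ.filter (fun v => z i v = 1) with hφ
  have hzφ : ∀ i ∈ t, z i = incVec (φ i) ∧ IsIndep G (φ i) := by
    intro i hi
    obtain ⟨s, hs, hzi⟩ := hzS i hi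
    have : φ i = s := by
      ext v
      simp only [hφ, Finset.mem_filter, Finset.mem_univ, true_and, hzi, incVec]
      by_cases hv : v ∈ s <;> simp [hv]
    rw [this]; exact ⟨hzi, hs⟩
  set W : Finset (Fin n) → ℝ := fun s => ((d : ℝ) / r) * ∑ i ∈ t.filter (fun i => φ i = s), w i
    with hW
  have hdr : (0:ℝ) < (d : ℝ) / r := by positivity
  refine ⟨W, ⟨?_, ?_, ?_⟩, ?_⟩
  · intro s
    apply mul_nonneg hdr.le
    exact Finset.sum_nonneg fun i hi => hw0 i (Finset.mem_of_mem_filter i hi)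
  · intro s hs
    have : ∑ i ∈ t.filter (fun i => φ i = s), w i ≠ 0 := by
      intro hc; apply hs; rw [hW]; simp [hc]
    obtain ⟨i, hi, -⟩ := Finset.exists_ne_zero_of_sum_ne_zero this
    obtain ⟨hit, hφi⟩ := Finset.mem_filter.mp hi
    rw [← hφi]; exact (hzφ i hit).2
  · intro v
    have key : ∑ s : Finset (Fin n), (if v ∈ s then W s else 0)
        = ((d : ℝ) / r) * ∑ i ∈ t, (if v ∈ φ i then w i else 0) := by
      rw [Finset.mul_sum]
      rw [← Finset.sum_fiberwise t φ (fun i => ((d:ℝ)/r) * (if v ∈ φ i then w i else 0))]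
      apply Finset.sum_congr rfl
      intro s _
      by_cases hv : v ∈ s
      · rw [if_pos hv]
        simp only [hW]
        rw [Finset.mul_sum]
        apply Finset.sum_congr rfl
        intro i hi
        rw [if_pos ((Finset.mem_filter.mp hi).2 ▸ hv)]
      · rw [if_neg hv]
        symm
        apply Finset.sum_eq_zero
        intro i hi
        rw [if_neg ((Finset.mem_filter.mp hi).2 ▸ hv), mul_zero]
    have hx : ∑ i ∈ t, (if v ∈ φ i then w i else 0) = (r : ℝ) / d := by
      have : ∀ i ∈ t, (if v ∈ φ i then w i else 0) = w i * z i v := by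
        intro i hi
        rw [(hzφ i hi).1, incVec]
        by_cases hv : v ∈ φ i <;> simp [hv]
      rw [Finset.sum_congr rfl this]
      have := congrFun hcm v
      simpa [Finset.sum_apply] using this
    rw [key, hx]
    rw [div_mul_div_comm]
    rw [mul_comm (d:ℝ)]
    rw [div_self (by positivity)]
  · rw [totalWeight]
    simp only [hW]
    rw [← Finset.mul_sum]
    rw [Finset.sum_fiberwise t φ w, hw1, mul_one]

theorem stmt2 {n d : ℕ} (G : SimpleGraph (Fin n)) (r : ℕ) (hd : 1 ≤ d) (hr : 1 ≤ r)
    (P : Fin n → Matrix (Fin d) (Fin d) ℂ)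
    (hP : ∀ k, IsProjOfRank r (P k)) (hreal : Realizes G P)
    (hchi : ∀ w : Finset (Fin n) → ℝ, IsFracColoring G w → (d : ℝ) / r < totalWeight w) :
    ∀ ρ : Matrix (Fin d) (Fin d) ℂ, ρ.PosSemidef → ρ.trace = 1 →
      ∃ U : Matrix (Fin d) (Fin d) ℂ, U ∈ Matrix.unitaryGroup (Fin d) ℂ ∧
        (fun k : Fin n => ((U * P k * Uᴴ * ρ).trace).re) ∉ STAB G := by
  intro ρ hρ hρtr
  by_contra hcon
  push_neg at hcon
  obtain ⟨m, rfl⟩ : ∃ m, d = m + 1 := ⟨d - 1, (Nat.succ_pred_eq_of_pos hd).symm⟩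
  -- the average of the conjugated states
  set c : ℝ := (((m+1 : ℕ) : ℝ) * 2^(m+1))⁻¹ with hc
  have hcpos : 0 < c := by positivity
  -- key trace computation
  have key : ∀ k : Fin n,
      ∑ p : Fin (m+1) × (Fin (m+1) → Bool),
        ((myU m p.1 p.2 * P k * (myU m p.1 p.2)ᴴ * ρ).trace).re
      = 2^(m+1) * r := by
    intro k
    have step1 : ∀ p : Fin (m+1) × (Fin (m+1) → Bool),
        (myU m p.1 p.2 * P k * (myU m p.1 p.2)ᴴ * ρ).trace
        = (P k * ((myU m p.1 p.2)ᴴ * ρ * myU m p.1 p.2)).trace := by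
      intro p
      set U := myU m p.1 p.2
      have h1 : U * P k * Uᴴ * ρ = U * (P k * Uᴴ * ρ) := by
        simp only [Matrix.mul_assoc]
      rw [h1, Matrix.trace_mul_comm]
      simp only [Matrix.mul_assoc]
    rw [← Complex.re_sum]
    rw [Finset.sum_congr rfl (fun p _ => step1 p)]
    have h2 : ∑ p : Fin (m+1) × (Fin (m+1) → Bool),
        (P k * ((myU m p.1 p.2)ᴴ * ρ * myU m p.1 p.2)).trace
        = (P k * (((2^(m+1) : ℂ) * ρ.trace) • 1)).trace := by
      rw [← Matrix.trace_sum, ← Finset.mul_sum]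
      congr 2
      rw [Fintype.sum_prod_type]
      exact avg_identity m ρ
    rw [h2, hρtr, mul_one, Matrix.mul_smul, Matrix.mul_one, Matrix.trace_smul,
      trace_of_proj (hP k).1 (hP k).2.1 (hP k).2.2]
    have hcast : (2^(m+1) : ℂ) • (r : ℂ) = (((2^(m+1) * r : ℝ)) : ℂ) := by
      push_cast; rw [smul_eq_mul]
    rw [hcast, Complex.ofReal_re]
  have hmem : (fun _ : Fin n => (r:ℝ)/(((m+1 : ℕ)):ℝ)) ∈ STAB G := by
    have hconv : Convex ℝ (STAB G) := convex_convexHull ℝ _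
    have hsum : ∑ p : Fin (m+1) × (Fin (m+1) → Bool),
        c • (fun k : Fin n => ((myU m p.1 p.2 * P k * (myU m p.1 p.2)ᴴ * ρ).trace).re)
        = fun _ : Fin n => (r:ℝ)/(((m+1 : ℕ)):ℝ) := by
      funext k
      rw [Finset.sum_apply]
      simp only [Pi.smul_apply, smul_eq_mul]
      rw [← Finset.mul_sum, key k, hc]
      have h2 : (0:ℝ) < 2^(m+1) := by positivity
      have hm : (0:ℝ) < ((m+1 : ℕ):ℝ) := by positivity
      field_simp
    rw [← hsum]
    apply hconv.sum_mem
    · intro p _; exact hcpos.le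
    · rw [Finset.sum_const]
      rw [Finset.card_univ, Fintype.card_prod, Fintype.card_fun, Fintype.card_fin,
        Fintype.card_bool, nsmul_eq_mul, hc]
      rw [mul_inv_eq_one₀ (by positivity)]
      push_cast; ring
    · intro p _; exact hcon _ (myU_unitary m p.1 p.2)
  obtain ⟨w, hwcol, hwtot⟩ := extract_coloring G (Nat.succ_pos m) hr hmem
  have hlt := hchi w hwcol
  rw [hwtot] at hlt
  exact lt_irrefl _ hlt
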